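/- Let l ≥ 3 and ν : ZMod l → ℤ × ℤ encode a smooth complete fan in ℤ². Then for every nonzero u ∈ ℤ × ℤ, the set S_u = {i ∈ ZMod l : ⟨ν i, u⟩ < 0} is nonempty, is not all of ZMod l, and the cyclic adjacency graph on S_u is connected (i.e., S_u is a nonempty proper cyclic arc of indices). This is the two-dimensional case of the claim, established in the proof of the paper's Lemma, that the graph Γ̃_i(u) on all rays pairing negatively with u is connected, because the open half-space {v : ⟨v, u⟩ < 0} is convex. -/

import Mathlib

/-- The pairing ⟨v, u⟩ = v.1 * u.1 + v.2 * u.2 between N = ℤ² and M = ℤ². -/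
def pairing (v u : ℤ × ℤ) : ℤ := v.1 * u.1 + v.2 * u.2

/-- det(v, w) = v.1 * w.2 − v.2 * w.1. -/
def det2 (v w : ℤ × ℤ) : ℤ := v.1 * w.2 - v.2 * w.1

/-- View a lattice point in ℚ². -/
def toQ (v : ℤ × ℤ) : ℚ × ℚ := ((v.1 : ℚ), (v.2 : ℚ))

/-- The closed cone spanned by a and b. -/
def closedCone (a b : ℤ × ℤ) : Set (ℚ × ℚ) :=
  {x | ∃ s t : ℚ, 0 ≤ s ∧ 0 ≤ t ∧ x = s • toQ a + t • toQ b}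

/-- The open cone spanned by a and b. -/
def openCone (a b : ℤ × ℤ) : Set (ℚ × ℚ) :=
  {x | ∃ s t : ℚ, 0 < s ∧ 0 < t ∧ x = s • toQ a + t • toQ b}

/-- ν : ZMod l → ℤ × ℤ encodes a smooth complete fan in ℤ²:
(i) each successive pair of ray generators has determinant 1;
(ii) the closed two-dimensional cones cover ℚ²;
(iii) the open two-dimensional cones are pairwise disjoint. -/
structure IsSmoothCompleteFan {l : ℕ} (ν : ZMod l → ℤ × ℤ) : Prop where
  det_one : ∀ i : ZMod l, det2 (ν i) (ν (i + 1)) = 1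
  covers : ∀ x : ℚ × ℚ, ∃ i : ZMod l, x ∈ closedCone (ν i) (ν (i + 1))
  disjointOpen : ∀ i j : ZMod l, i ≠ j →
    Disjoint (openCone (ν i) (ν (i + 1))) (openCone (ν j) (ν (j + 1)))

/-- The cycle graph on ZMod l: distinct j, k are adjacent iff k = j + 1 or j = k + 1. -/
def cycleGraph (l : ℕ) : SimpleGraph (ZMod l) where
  Adj j k := j ≠ k ∧ (k = j + 1 ∨ j = k + 1)
  symm := by
    constructor
    intro a b h
    exact ⟨h.1.symm, h.2.symm⟩
  loopless := by
    constructor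
    intro a h
    exact h.1 rfl

namespace NegRaysAux

def detQ (v w : ℚ × ℚ) : ℚ := v.1 * w.2 - v.2 * w.1

lemma detQ_toQ (a b : ℤ × ℤ) : detQ (toQ a) (toQ b) = (det2 a b : ℚ) := by
  simp [detQ, toQ, det2]

lemma mem_openCone (a b : ℤ × ℤ) (hab : det2 a b = 1) (x : ℚ × ℚ)
    (h1 : 0 < detQ (toQ a) x) (h2 : 0 < detQ x (toQ b)) : x ∈ openCone a b := by
  have hQ : (a.1 : ℚ) * b.2 - (a.2 : ℚ) * b.1 = 1 := by
    have := hab; simp only [det2] at this; exact_mod_cast congrArg (Int.cast : ℤ → ℚ) this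
  refine ⟨detQ x (toQ b), detQ (toQ a) x, h2, h1, ?_⟩
  have e1 : x.1 = detQ x (toQ b) * a.1 + detQ (toQ a) x * b.1 := by
    simp only [detQ, toQ]; linear_combination (-x.1) * hQ
  have e2 : x.2 = detQ x (toQ b) * a.2 + detQ (toQ a) x * b.2 := by
    simp only [detQ, toQ]; linear_combination (-x.2) * hQ
  ext
  · simpa [toQ] using e1
  · simpa [toQ] using e2

lemma detQ_add_smul_right (v w z : ℚ × ℚ) (δ : ℚ) :
    detQ v (w + δ • z) = detQ v w + δ * detQ v z := by
  simp [detQ, Prod.fst_add, Prod.snd_add, Prod.smul_fst, Prod.smul_snd, smul_eq_mul]; ring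

lemma detQ_add_smul_left (v w z : ℚ × ℚ) (δ : ℚ) :
    detQ (v + δ • w) z = detQ v z + δ * detQ w z := by
  simp [detQ, Prod.fst_add, Prod.snd_add, Prod.smul_fst, Prod.smul_snd, smul_eq_mul]; ring

lemma smallδ (e k δ : ℚ) (_he : 0 < e) (hδ : 0 < δ) (h : δ * (|k| + 1) ≤ e) :
    0 < e + δ * k := by
  nlinarith [mul_le_mul_of_nonneg_left (neg_abs_le k) hδ.le, abs_nonneg k]

lemma plucker (c b x d : ℚ × ℚ) :
    detQ c b * detQ x d = detQ c x * detQ b d + detQ x b * detQ c d := by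
  simp only [detQ]; ring

/-- Two cones with disjoint interiors cannot both contain, on their "counterclockwise-open"
side, a common direction x. -/
lemma sep2 (a b c d : ℤ × ℤ) (hab : det2 a b = 1) (hcd : det2 c d = 1)
    (hdisj : Disjoint (openCone a b) (openCone c d))
    (x : ℚ × ℚ) (h1 : 0 ≤ detQ (toQ a) x) (h2 : 0 < detQ x (toQ b))
    (h3 : 0 ≤ detQ (toQ c) x) (h4 : 0 < detQ x (toQ d)) : False := by
  set aQ := toQ a; set bQ := toQ b; set cQ := toQ c; set dQ := toQ d
  have habQ : detQ aQ bQ = 1 := by rw [detQ_toQ, hab]; norm_num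
  have hcdQ : detQ cQ dQ = 1 := by rw [detQ_toQ, hcd]; norm_num
  have hbb : detQ bQ bQ = 0 := by simp [detQ]; ring
  have key : ∀ e k m : ℚ, m ≤ e / (|k| + 1) → m * (|k| + 1) ≤ e := by
    intro e k m hm
    calc m * (|k| + 1) ≤ e / (|k| + 1) * (|k| + 1) :=
          mul_le_mul_of_nonneg_right hm (by positivity)
      _ = e := div_mul_cancel₀ _ (by positivity)
  obtain ⟨δ, hδ, hc1, hc2⟩ : ∃ δ : ℚ, 0 < δ ∧ 0 < detQ cQ x + δ * detQ cQ bQ ∧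
      0 < detQ x dQ + δ * detQ bQ dQ := by
    rcases h3.eq_or_lt with h3' | h3'
    · have hcb : 0 < detQ cQ bQ := by
        have hp : detQ cQ bQ * detQ x dQ = detQ x bQ := by
          rw [plucker cQ bQ x dQ, ← h3', hcdQ]; ring
        nlinarith [h2, h4]
      refine ⟨detQ x dQ / (|detQ bQ dQ| + 1), by positivity, ?_, ?_⟩
      · rw [← h3']; positivity
      · exact smallδ _ _ _ h4 (by positivity) (key _ _ _ le_rfl)
    · refine ⟨min (detQ cQ x / (|detQ cQ bQ| + 1)) (detQ x dQ / (|detQ bQ dQ| + 1)),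
        lt_min (by positivity) (by positivity), ?_, ?_⟩
      · exact smallδ _ _ _ h3' (lt_min (by positivity) (by positivity))
          (key _ _ _ (min_le_left _ _))
      · exact smallδ _ _ _ h4 (lt_min (by positivity) (by positivity))
          (key _ _ _ (min_le_right _ _))
  set y := x + δ • bQ with hy
  have hy1 : y ∈ openCone a b := by
    refine mem_openCone a b hab y ?_ ?_
    · rw [hy, detQ_add_smul_right, habQ]; nlinarith
    · rw [hy, detQ_add_smul_left, hbb]; nlinarith
  have hy2 : y ∈ openCone c d := by
    refine mem_openCone c d hcd y ?_ ?_
    · rw [hy, detQ_add_smul_right]; exact hc1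
    · rw [hy, detQ_add_smul_left]; exact hc2
  exact Set.disjoint_left.mp hdisj hy1 hy2

lemma arc_connected (l : ℕ) (hl : 3 ≤ l) (S : Set (ZMod l))
    (hne : S.Nonempty) (hproper : S ≠ Set.univ)
    (huniq : ∀ i j : ZMod l, i ∉ S → i + 1 ∈ S → j ∉ S → j + 1 ∈ S → i = j) :
    ((cycleGraph l).induce S).Connected := by
  haveI : NeZero l := ⟨by omega⟩
  haveI : Fact (1 < l) := ⟨by omega⟩
  classical
  obtain ⟨z, hz⟩ : ∃ z, z ∉ S := by
    by_contra h; push_neg at h; exact hproper (Set.eq_univ_iff_forall.mpr h)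
  set P : ℕ → Prop := fun n => z + (n : ZMod l) ∈ S with hPdef
  have hP0 : ¬ P 0 := by simpa [P] using hz
  have hPl : ¬ P l := by simp only [P, ZMod.natCast_self, add_zero]; exact hz
  obtain ⟨a, ha⟩ := hne
  have hex : ∃ n, P n := by
    refine ⟨(a - z).val, ?_⟩
    simp only [P, ZMod.natCast_val, ZMod.cast_id]
    simpa using ha
  set m := Nat.find hex with hmdef
  have hm : P m := Nat.find_spec hex
  have hm1 : 1 ≤ m := by
    rcases Nat.eq_zero_or_pos m with h | h
    · exact absurd (h ▸ hm) hP0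
    · exact h
  have hmlt : m < l := by
    have h1 : m ≤ (a - z).val := Nat.find_min' hex (by
      simp only [P, ZMod.natCast_val, ZMod.cast_id]; simpa using ha)
    exact lt_of_le_of_lt h1 (ZMod.val_lt _)
  have hPl' : ¬ P (l - 1 + 1) := by
    have h : l - 1 + 1 = l := by omega
    rw [h]; exact hPl
  have hex2 : ∃ n, m ≤ n ∧ ¬ P (n + 1) := ⟨l - 1, by omega, hPl'⟩
  set M := Nat.find hex2 with hMdef
  obtain ⟨hmM, hPM1⟩ : m ≤ M ∧ ¬ P (M + 1) := Nat.find_spec hex2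
  have hMl : M ≤ l - 1 := Nat.find_min' hex2 ⟨by omega, hPl'⟩
  have hPIcc : ∀ k, m ≤ k → k ≤ M → P k := by
    intro k hk
    induction k, hk using Nat.le_induction with
    | base => intro _; exact hm
    | succ n hn ih =>
      intro hle
      by_contra hc
      have : M ≤ n := Nat.find_min' hex2 ⟨hn, hc⟩
      omega
  have hmem : ∀ s, s ∈ S → ∃ k, m ≤ k ∧ k ≤ M ∧ s = z + (k : ZMod l) := by
    intro s hs
    refine ⟨(s - z).val, ?_, ?_, ?_⟩
    · exact Nat.find_min' hex (by
        simp only [P, ZMod.natCast_val, ZMod.cast_id]; simpa using hs)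
    · set k := (s - z).val with hkdef
      have hPk : P k := by
        simp only [P, hkdef, ZMod.natCast_val, ZMod.cast_id]; simpa using hs
      have hklt : k < l := ZMod.val_lt _
      by_contra hcon
      push_neg at hcon
      have hex3 : ∃ n, M + 1 ≤ n ∧ P n := ⟨k, by omega, hPk⟩
      set N := Nat.find hex3 with hNdef
      obtain ⟨hN1, hPN⟩ : M + 1 ≤ N ∧ P N := Nat.find_spec hex3
      have hNk : N ≤ k := Nat.find_min' hex3 ⟨by omega, hPk⟩
      have hN2 : M + 2 ≤ N := by
        rcases Nat.lt_or_ge N (M + 2) with h | h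
        · exfalso
          have : N = M + 1 := by omega
          exact hPM1 (this ▸ hPN)
        · exact h
      have hPN1 : ¬ P (N - 1) := by
        intro hc
        have : N ≤ N - 1 := Nat.find_min' hex3 ⟨by omega, hc⟩
        omega
      have hPm1 : ¬ P (m - 1) := Nat.find_min hex (by omega)
      have e1 : (z + ((m - 1 : ℕ) : ZMod l)) + 1 = z + ((m : ℕ) : ZMod l) := by
        have h' : ((m - 1 : ℕ) : ZMod l) + 1 = ((m - 1 + 1 : ℕ) : ZMod l) := by push_cast; ring
        rw [add_assoc, h']
        congr 2
        omega
      have e2 : (z + ((N - 1 : ℕ) : ZMod l)) + 1 = z + ((N : ℕ) : ZMod l) := by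
        have h' : ((N - 1 : ℕ) : ZMod l) + 1 = ((N - 1 + 1 : ℕ) : ZMod l) := by push_cast; ring
        rw [add_assoc, h']
        congr 2
        omega
      have heq := huniq (z + ((m - 1 : ℕ) : ZMod l)) (z + ((N - 1 : ℕ) : ZMod l))
        hPm1 (by rw [e1]; exact hm) hPN1 (by rw [e2]; exact hPN)
      have heq2 : ((m - 1 : ℕ) : ZMod l) = ((N - 1 : ℕ) : ZMod l) := add_left_cancel heq
      have hval : m - 1 = N - 1 := by
        have := congrArg ZMod.val heq2
        rwa [ZMod.val_natCast_of_lt (by omega), ZMod.val_natCast_of_lt (by omega)] at this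
      omega
    · set k := (s - z).val with hkdef
      simp only [hkdef, ZMod.natCast_val, ZMod.cast_id]
      ring
  have hmm : z + ((m : ℕ) : ZMod l) ∈ S := hm
  set v0 : ↥S := ⟨z + ((m : ℕ) : ZMod l), hmm⟩ with hv0
  have hreach : ∀ k, m ≤ k → k ≤ M → ∀ h : z + ((k : ℕ) : ZMod l) ∈ S,
      ((cycleGraph l).induce S).Reachable v0 ⟨z + ((k : ℕ) : ZMod l), h⟩ := by
    intro k hk
    induction k, hk using Nat.le_induction with
    | base => intro _ h; exact SimpleGraph.Reachable.refl _
    | succ n hn ih =>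
      intro hle h
      have hn' : z + ((n : ℕ) : ZMod l) ∈ S := hPIcc n hn (by omega)
      have hadj : (cycleGraph l).Adj (z + ((n : ℕ) : ZMod l)) (z + (((n + 1 : ℕ)) : ZMod l)) := by
        constructor
        · intro hcontra
          have h2 : ((n : ℕ) : ZMod l) = ((n + 1 : ℕ) : ZMod l) := add_left_cancel hcontra
          push_cast at h2
          have h3 : (0 : ZMod l) = 1 := by linear_combination h2
          exact zero_ne_one h3
        · left; push_cast; ring
      have hstep : ((cycleGraph l).induce S).Adj ⟨z + ((n : ℕ) : ZMod l), hn'⟩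
          ⟨z + (((n + 1 : ℕ)) : ZMod l), h⟩ := hadj
      exact (ih (by omega) hn').trans hstep.reachable
  haveI : Nonempty ↥S := ⟨v0⟩
  refine ⟨?_⟩
  intro x y
  obtain ⟨x, hx⟩ := x
  obtain ⟨y, hy⟩ := y
  obtain ⟨k1, hk1m, hk1M, rfl⟩ := hmem x hx
  obtain ⟨k2, hk2m, hk2M, rfl⟩ := hmem y hy
  exact (hreach k1 hk1m hk1M hx).symm.trans (hreach k2 hk2m hk2M hy)

end NegRaysAux

open NegRaysAux in
/-- For any nonzero degree u, the set of rays pairing negatively with u is a nonempty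
proper cyclic arc: it is nonempty, proper, and its cyclic adjacency graph is connected. -/
theorem negativeRays_connected (l : ℕ) (hl : 3 ≤ l) (ν : ZMod l → ℤ × ℤ)
    (hfan : IsSmoothCompleteFan ν) (u : ℤ × ℤ) (hu : u ≠ 0) :
    {i : ZMod l | pairing (ν i) u < 0}.Nonempty ∧
    {i : ZMod l | pairing (ν i) u < 0} ≠ Set.univ ∧
    ((cycleGraph l).induce {i : ZMod l | pairing (ν i) u < 0}).Connected := by
  set S := {i : ZMod l | pairing (ν i) u < 0} with hS
  have hu2 : (0:ℚ) < (u.1:ℚ)^2 + (u.2:ℚ)^2 := by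
    have h : u.1 ≠ 0 ∨ u.2 ≠ 0 := by
      by_contra h; push_neg at h
      exact hu (Prod.ext h.1 h.2)
    rcases h with h | h
    · have : (u.1 : ℚ) ≠ 0 := by exact_mod_cast h
      positivity
    · have : (u.2 : ℚ) ≠ 0 := by exact_mod_cast h
      positivity
  -- Nonempty
  have hne : S.Nonempty := by
    by_contra h
    rw [Set.not_nonempty_iff_eq_empty] at h
    have hall : ∀ i : ZMod l, 0 ≤ pairing (ν i) u := by
      intro i
      by_contra hi
      push_neg at hi
      exact Set.eq_empty_iff_forall_notMem.mp h i hi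
    obtain ⟨i, s, t, hs, ht, hx⟩ := hfan.covers (-(toQ u))
    have hx1 := congrArg Prod.fst hx
    have hx2 := congrArg Prod.snd hx
    simp only [toQ, Prod.fst_add, Prod.snd_add, Prod.smul_fst, Prod.smul_snd, smul_eq_mul,
      Prod.fst_neg, Prod.snd_neg] at hx1 hx2
    have hA : (0:ℚ) ≤ (pairing (ν i) u : ℚ) := by exact_mod_cast hall i
    have hB : (0:ℚ) ≤ (pairing (ν (i+1)) u : ℚ) := by exact_mod_cast hall (i+1)
    have hkey : s * (pairing (ν i) u : ℚ) + t * (pairing (ν (i+1)) u : ℚ)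
        = -((u.1:ℚ)^2 + (u.2:ℚ)^2) := by
      simp only [pairing]
      push_cast
      linear_combination (-(u.1:ℚ)) * hx1 - (u.2:ℚ) * hx2
    nlinarith [mul_nonneg hs hA, mul_nonneg ht hB]
  -- Proper
  have hproper : S ≠ Set.univ := by
    intro h
    have hall : ∀ i : ZMod l, pairing (ν i) u < 0 := fun i => Set.eq_univ_iff_forall.mp h i
    obtain ⟨i, s, t, hs, ht, hx⟩ := hfan.covers (toQ u)
    have hx1 := congrArg Prod.fst hx
    have hx2 := congrArg Prod.snd hx
    simp only [toQ, Prod.fst_add, Prod.snd_add, Prod.smul_fst, Prod.smul_snd,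
      smul_eq_mul] at hx1 hx2
    have hA : (pairing (ν i) u : ℚ) < 0 := by exact_mod_cast hall i
    have hB : (pairing (ν (i+1)) u : ℚ) < 0 := by exact_mod_cast hall (i+1)
    have hkey : s * (pairing (ν i) u : ℚ) + t * (pairing (ν (i+1)) u : ℚ)
        = (u.1:ℚ)^2 + (u.2:ℚ)^2 := by
      simp only [pairing]
      push_cast
      linear_combination (-(u.1:ℚ)) * hx1 - (u.2:ℚ) * hx2
    nlinarith [mul_nonpos_of_nonneg_of_nonpos hs hA.le, mul_nonpos_of_nonneg_of_nonpos ht hB.le]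
  -- uniqueness of up-transitions
  have huniq : ∀ i j : ZMod l, i ∉ S → i + 1 ∈ S → j ∉ S → j + 1 ∈ S → i = j := by
    intro i j hi hi1 hj hj1
    by_contra hij
    simp only [hS, Set.mem_setOf_eq, not_lt] at hi hi1 hj hj1
    have hdisj := hfan.disjointOpen i j hij
    set x : ℚ × ℚ := ((-u.2 : ℚ), (u.1 : ℚ)) with hxdef
    have hpair : ∀ v : ℤ × ℤ, detQ (toQ v) x = (pairing v u : ℚ) := by
      intro v; simp only [detQ, toQ, hxdef, pairing]; push_cast; ring
    have hpair' : ∀ v : ℤ × ℤ, detQ x (toQ v) = -(pairing v u : ℚ) := by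
      intro v; simp only [detQ, toQ, hxdef, pairing]; push_cast; ring
    refine sep2 (ν i) (ν (i+1)) (ν j) (ν (j+1)) (hfan.det_one i) (hfan.det_one j) hdisj x
      ?_ ?_ ?_ ?_
    · rw [hpair]; exact_mod_cast hi
    · rw [hpair']; simp only [neg_pos]; exact_mod_cast hi1
    · rw [hpair]; exact_mod_cast hj
    · rw [hpair']; simp only [neg_pos]; exact_mod_cast hj1
  exact ⟨hne, hproper, arc_connected l hl S hne hproper huniq⟩
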